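/- Let N ≥ 1 and n ≥ 0 be natural numbers and let F, G ∈ ℚ⟦X⟧ be such that (1 − X^N)^{n+1} · F and (1 − X^N)^{n+1} · G are both polynomials of degree < N(n+1). If limsup_{t→∞} |{k ∈ ℕ : k ≤ t and coeff_k F ≠ coeff_k G}| / t < 1/N, then F = G. (The power-series form of Corollary 1.4 of the paper: a strong multiplicity one theorem allowing an exceptional set of density less than 1/N.) -/

import Mathlib

open Polynomial Finset

lemma fwdDiff_poly_eval (n : ℕ) : ∀ (P : Polynomial ℚ), P.natDegree ≤ n →
    ∀ m : ℕ, (fwdDiff (1:ℕ))^[n + 1] (fun k : ℕ => P.eval (k : ℚ)) m = 0 := by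
  induction n with
  | zero =>
    intro P hP m
    rw [P.eq_C_of_natDegree_le_zero hP]
    simp [fwdDiff]
  | succ n IH =>
    intro P hP m
    rw [Function.iterate_succ_apply]
    set Q : Polynomial ℚ := P.comp (X + C 1) - P with hQdef
    have hstep : fwdDiff (1:ℕ) (fun k : ℕ => P.eval (k : ℚ)) = fun k : ℕ => Q.eval (k : ℚ) := by
      funext k
      simp only [fwdDiff, hQdef, eval_sub, eval_comp, eval_add, eval_X, eval_C]
      push_cast
      ring_nf
    rw [hstep]
    apply IH
    -- natDegree Q ≤ n
    by_cases h0 : P.natDegree = 0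
    · rw [hQdef, P.eq_C_of_natDegree_le_zero h0.le]
      simp
    · have hPne : P ≠ 0 := fun h => h0 (by simp [h])
      have hnc : (X + C (1:ℚ)).natDegree = 1 := natDegree_X_add_C 1
      have hlc : (P.comp (X + C 1)).leadingCoeff = P.leadingCoeff := by
        rw [leadingCoeff_comp (by rw [hnc]; exact one_ne_zero),
          (monic_X_add_C (1:ℚ)).leadingCoeff, one_pow, mul_one]
      have hcompne : P.comp (X + C 1) ≠ 0 := by
        intro h
        apply hPne
        rw [← leadingCoeff_eq_zero, ← hlc, h, leadingCoeff_zero]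
      have hdeg : (P.comp (X + C 1)).degree = P.degree := by
        rw [degree_eq_natDegree hcompne, degree_eq_natDegree hPne, natDegree_comp, hnc, mul_one]
      have hlt : Q.degree < P.degree := by
        have := degree_sub_lt hdeg hcompne hlc
        rwa [hdeg] at this
      by_cases hQ0 : Q = 0
      · simp [hQ0]
      · have := natDegree_lt_natDegree hQ0 hlt
        omega

lemma seq_eq_poly (n : ℕ) (a : ℕ → ℚ) (ha : ∀ m, (fwdDiff (1:ℕ))^[n+1] a m = 0) :
    ∃ P : Polynomial ℚ, ∀ m : ℕ, a m = P.eval (m : ℚ) := by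
  have hinj : Set.InjOn (fun i : ℕ => (i : ℚ)) (Finset.range (n+1)) :=
    fun x _ y _ h => Nat.cast_injective h
  set P : Polynomial ℚ := Lagrange.interpolate (Finset.range (n+1)) (fun i : ℕ => (i : ℚ)) a
    with hPdef
  have hPdeg : P.natDegree ≤ n := by
    have hd := Lagrange.degree_interpolate_lt a hinj
    rw [Finset.card_range] at hd
    by_cases hP0 : P = 0
    · simp [hP0]
    · have := (natDegree_lt_iff_degree_lt hP0).mpr hd
      omega
  have hnode : ∀ i ∈ Finset.range (n+1), P.eval (i : ℚ) = a i := fun i hi =>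
    Lagrange.eval_interpolate_at_node a hinj hi
  refine ⟨P, ?_⟩
  set c : ℕ → ℚ := fun m => a m - P.eval (m : ℚ) with hcdef
  have hc : ∀ m, (fwdDiff (1:ℕ))^[n+1] c m = 0 := by
    intro m
    have hsub : c = a + (-1 : ℚ) • (fun k : ℕ => P.eval (k : ℚ)) := by
      funext k; simp [hcdef]; ring
    rw [hsub, fwdDiff_iter_add, Pi.add_apply, ha m, fwdDiff_iter_const_smul, Pi.smul_apply,
      fwdDiff_poly_eval n P hPdeg m, smul_zero, add_zero]
  have hzero : ∀ m, c m = 0 := by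
    intro m
    induction m using Nat.strong_induction_on with
    | _ m ih =>
      by_cases hm : m ≤ n
      · simp [hcdef, hnode m (Finset.mem_range.mpr (by omega))]
      · obtain ⟨m', rfl⟩ : ∃ m', m = m' + (n+1) := ⟨m - (n+1), by omega⟩
        have h0 := hc m'
        rw [fwdDiff_iter_eq_sum_shift] at h0
        rw [Finset.sum_range_succ] at h0
        have hz : ∀ k ∈ Finset.range (n+1),
            ((-1 : ℤ) ^ (n + 1 - k) * ((n+1).choose k)) • c (m' + k • 1) = 0 := by
          intro k hk
          rw [Finset.mem_range] at hk
          rw [smul_eq_zero]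
          right
          exact ih (m' + k • 1) (by simp; omega)
        rw [Finset.sum_eq_zero hz, zero_add] at h0
        simpa using h0
  intro m
  have := hzero m
  simp only [hcdef] at this
  linarith

theorem strong_multiplicity_one_series (N n : ℕ) (hN : 1 ≤ N)
    (F G : PowerSeries ℚ)
    (hF : ∃ p : Polynomial ℚ, p.degree < (N * (n + 1) : ℕ) ∧
      (1 - PowerSeries.X ^ N) ^ (n + 1) * F = (p : PowerSeries ℚ))
    (hG : ∃ q : Polynomial ℚ, q.degree < (N * (n + 1) : ℕ) ∧
      (1 - PowerSeries.X ^ N) ^ (n + 1) * G = (q : PowerSeries ℚ))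
    (h : Filter.limsup
        (fun t : ℕ =>
          (Nat.card {k : ℕ | k ≤ t ∧ PowerSeries.coeff k F ≠ PowerSeries.coeff k G} : ℝ) / t)
        Filter.atTop < 1 / N) :
    F = G := by
  classical
  by_contra hne
  obtain ⟨p, hp, hFp⟩ := hF
  obtain ⟨q, hq, hGq⟩ := hG
  set H : PowerSeries ℚ := F - G with hHdef
  have key : (1 - PowerSeries.X ^ N) ^ (n + 1) * H = ((p - q : Polynomial ℚ) : PowerSeries ℚ) := by
    rw [hHdef, mul_sub, hFp, hGq, Polynomial.coe_sub]
  have hr : (p - q).degree < (N * (n+1) : ℕ) :=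
    lt_of_le_of_lt (Polynomial.degree_sub_le p q) (max_lt hp hq)
  obtain ⟨k0, hk0⟩ : ∃ k, PowerSeries.coeff k H ≠ 0 := by
    by_contra hall
    push_neg at hall
    have : H = 0 := PowerSeries.ext fun k => by simpa using hall k
    exact hne (sub_eq_zero.mp (hHdef ▸ this))
  -- expansion of (1 - X^N)^(n+1)
  have expand : ((1 : PowerSeries ℚ) - PowerSeries.X ^ N) ^ (n+1)
      = ∑ i ∈ Finset.range (n+2),
          PowerSeries.C ((-1:ℚ)^i * ((n+1).choose i : ℚ)) * PowerSeries.X ^ (N*i) := by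
    have h1 : ((1 : PowerSeries ℚ) - PowerSeries.X ^ N)
        = PowerSeries.C (-1) * PowerSeries.X ^ N + 1 := by
      rw [map_neg, map_one]; ring
    rw [h1, add_pow]
    refine Finset.sum_congr rfl fun i _ => ?_
    rw [one_pow, mul_one, mul_pow, ← map_pow, ← pow_mul, map_mul,
      ← map_natCast (PowerSeries.C) ((n+1).choose i)]
    ring
  set j := k0 % N with hj
  set a : ℕ → ℚ := fun m => PowerSeries.coeff (j + m * N) H with hadef
  have hrec : ∀ m, (fwdDiff (1:ℕ))^[n+1] a m = 0 := by
    intro m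
    have hcoeff0 : PowerSeries.coeff (j + (m + (n+1)) * N)
        ((1 - PowerSeries.X ^ N) ^ (n + 1) * H) = 0 := by
      rw [key, Polynomial.coeff_coe]
      apply Polynomial.coeff_eq_zero_of_degree_lt
      refine lt_of_lt_of_le hr ?_
      have hle : N * (n+1) ≤ j + (m + (n+1)) * N :=
        le_trans (by rw [Nat.mul_comm]; exact Nat.mul_le_mul_right _ (by omega))
          (Nat.le_add_left _ _)
      exact_mod_cast Nat.cast_le.mpr hle
    rw [expand, Finset.sum_mul, map_sum] at hcoeff0
    have hterm : ∀ i ∈ Finset.range (n+2),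
        (PowerSeries.coeff (j + (m + (n+1)) * N))
          (PowerSeries.C ((-1:ℚ)^i * ((n+1).choose i : ℚ)) * PowerSeries.X ^ (N*i) * H)
        = ((-1:ℚ)^i * ((n+1).choose i : ℚ)) * a (m + ((n+1) - i)) := by
      intro i hi
      rw [Finset.mem_range] at hi
      have hidx : j + (m + (n+1)) * N = (j + (m + ((n+1) - i)) * N) + N * i := by
        have h2 : (m + ((n+1) - i)) * N + N * i = (m + (n+1)) * N := by
          have h3 : m + ((n+1) - i) + i = m + (n+1) := by omega
          calc (m + ((n+1) - i)) * N + N * i = (m + ((n+1) - i) + i) * N := by ring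
          _ = (m + (n+1)) * N := by rw [h3]
        rw [← h2, Nat.add_assoc]
      rw [mul_assoc, hidx, PowerSeries.coeff_C_mul, PowerSeries.coeff_X_pow_mul]
    rw [Finset.sum_congr rfl hterm] at hcoeff0
    rw [fwdDiff_iter_eq_sum_shift, ← Finset.sum_range_reflect, ← hcoeff0]
    refine Finset.sum_congr rfl fun i hi => ?_
    rw [Finset.mem_range] at hi
    have h1 : n + 2 - 1 - i = n + 1 - i := by omega
    have h2 : (n+1) - (n+1-i) = i := by omega
    have h3 : (n+1).choose (n+1-i) = (n+1).choose i := Nat.choose_symm (by omega)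
    rw [h1, h2, h3, smul_eq_mul, zsmul_eq_mul]
    push_cast
    ring
  obtain ⟨P, hP⟩ := seq_eq_poly n a hrec
  have hPne : P ≠ 0 := by
    intro h0
    apply hk0
    have h1 : j + (k0 / N) * N = k0 := Nat.mod_add_div' k0 N
    have h2 := hP (k0 / N)
    rw [h0, Polynomial.eval_zero] at h2
    rw [← h1]
    exact h2
  have hfin : {m : ℕ | a m = 0}.Finite := by
    have hfin1 := Polynomial.finite_setOf_isRoot hPne
    refine Set.Finite.subset (Set.Finite.preimage (Nat.cast_injective.injOn) hfin1) ?_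
    intro m hm
    simp only [Set.mem_preimage, Set.mem_setOf_eq, Polynomial.IsRoot]
    rw [← hP m]
    exact hm
  obtain ⟨M, hM⟩ := hfin.bddAbove
  have hbig : ∀ m, M < m →
      PowerSeries.coeff (j + m * N) F ≠ PowerSeries.coeff (j + m * N) G := by
    intro m hm heq
    have hz : a m = 0 := by
      simp only [hadef, hHdef, map_sub, heq, sub_self]
    exact absurd (hM hz) (by omega)
  have hNpos : 0 < N := hN
  obtain ⟨c, hc⟩ : ∃ c, c = (M+1) * N := ⟨_, rfl⟩
  obtain ⟨D, hD⟩ : ∃ D, D = j + c := ⟨_, rfl⟩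
  -- lower bound for the counting function
  have hlow : ∀ t : ℕ, D + 1 ≤ t →
      (1/(N:ℝ) - D/t) ≤
        ((Nat.card {k : ℕ | k ≤ t ∧
          PowerSeries.coeff k F ≠ PowerSeries.coeff k G} : ℝ) / t) := by
    intro t ht
    obtain ⟨v, hv⟩ : ∃ v, v = (t - j) / N := ⟨_, rfl⟩
    have hMv : M < v := by
      have h1 : (M+1) * N ≤ t - j := by omega
      have h2 : M + 1 ≤ (t - j) / N := (Nat.le_div_iff_mul_le hNpos).mpr h1
      omega
    have hsub : (((Finset.Ioc M v).image (fun m => j + m * N) : Finset ℕ) : Set ℕ) ⊆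
        {k : ℕ | k ≤ t ∧ PowerSeries.coeff k F ≠ PowerSeries.coeff k G} := by
      intro k hk
      simp only [Finset.coe_image, Set.mem_image, Finset.mem_coe, Finset.mem_Ioc] at hk
      obtain ⟨m, ⟨hm1, hm2⟩, rfl⟩ := hk
      refine ⟨?_, hbig m hm1⟩
      have e1 : m * N ≤ v * N := Nat.mul_le_mul_right N hm2
      have e2 : v * N ≤ t - j := by rw [hv]; exact Nat.div_mul_le_self _ _
      have hjt : j ≤ t := by omega
      have e3 := le_trans e1 e2
      have e4 := Nat.add_le_add_left e3 j
      omega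
    have hfint : {k : ℕ | k ≤ t ∧ PowerSeries.coeff k F ≠ PowerSeries.coeff k G}.Finite :=
      (Set.finite_Iic t).subset (fun k hk => hk.1)
    have hcard1 : v - M ≤ Nat.card {k : ℕ | k ≤ t ∧
        PowerSeries.coeff k F ≠ PowerSeries.coeff k G} := by
      rw [Nat.card_coe_set_eq]
      have h5 := Set.ncard_le_ncard hsub hfint
      rwa [Set.ncard_coe_finset,
        Finset.card_image_of_injective _
          (fun x y hxy => Nat.eq_of_mul_eq_mul_right hNpos (by omega)),
        Nat.card_Ioc] at h5
    -- real arithmetic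
    have htR : (0:ℝ) < t := by exact_mod_cast (by omega : 0 < t)
    have hNR : (1:ℝ) ≤ N := by exact_mod_cast hN
    have hNR0 : (0:ℝ) < N := by exact_mod_cast hNpos
    have hjt : j ≤ t := by omega
    have hvN : (t:ℝ) - j - N + 1 ≤ (v:ℝ) * N := by
      have h1 : N * ((t-j)/N) + (t-j) % N = t - j := Nat.div_add_mod (t-j) N
      have h2 : (t-j) % N < N := Nat.mod_lt _ hNpos
      have h3 : ((t - j : ℕ) : ℝ) = (t:ℝ) - j := by
        rw [Nat.cast_sub hjt]
      rw [hv]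
      have h4 : ((N * ((t-j)/N) + (t-j) % N : ℕ) : ℝ) = ((t - j:ℕ) : ℝ) := by rw [h1]
      push_cast at h4
      have h6 : (((t-j) % N : ℕ) : ℝ) + 1 ≤ N := by exact_mod_cast h2
      rw [h3] at h4
      have h7 : ((((t-j)/N : ℕ)) : ℝ) * N = (N:ℝ) * (((t-j)/N : ℕ) : ℝ) := mul_comm _ _
      linarith [h4, h6, h7]
    have hcardR : (v:ℝ) - M ≤ (Nat.card {k : ℕ | k ≤ t ∧
        PowerSeries.coeff k F ≠ PowerSeries.coeff k G} : ℝ) := by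
      have : ((v - M : ℕ) : ℝ) ≤ _ := Nat.cast_le.mpr hcard1
      rwa [Nat.cast_sub hMv.le] at this
    have step1 : ((v:ℝ) - M)/t ≤ (Nat.card {k : ℕ | k ≤ t ∧
        PowerSeries.coeff k F ≠ PowerSeries.coeff k G} : ℝ) / t := by
      gcongr
    refine le_trans ?_ step1
    have hDR : (D:ℝ) = (j:ℝ) + ((M:ℝ)+1)*N := by rw [hD, hc]; push_cast; ring
    have core : (t:ℝ) - N*D ≤ ((v:ℝ) - M)*N := by
      nlinarith [hvN, hDR, mul_nonneg (Nat.cast_nonneg j : (0:ℝ) ≤ j) (sub_nonneg.mpr hNR),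
        mul_nonneg (Nat.cast_nonneg M : (0:ℝ) ≤ M)
          (mul_nonneg hNR0.le (sub_nonneg.mpr hNR)),
        mul_nonneg (sub_nonneg.mpr hNR) hNR0.le]
    rw [div_sub_div _ _ (ne_of_gt hNR0) (ne_of_gt htR), div_le_div_iff₀ (by positivity) htR]
    nlinarith [mul_le_mul_of_nonneg_right core htR.le]
  -- limsup part
  have hub : Filter.IsBoundedUnder (· ≤ ·) Filter.atTop
      (fun t : ℕ => (Nat.card {k : ℕ | k ≤ t ∧
        PowerSeries.coeff k F ≠ PowerSeries.coeff k G} : ℝ) / t) := by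
    refine Filter.isBoundedUnder_of ⟨2, fun t => ?_⟩
    have h1 : Nat.card {k : ℕ | k ≤ t ∧
        PowerSeries.coeff k F ≠ PowerSeries.coeff k G} ≤ t + 1 := by
      rw [Nat.card_coe_set_eq]
      calc Set.ncard {k : ℕ | k ≤ t ∧ PowerSeries.coeff k F ≠ PowerSeries.coeff k G}
          ≤ Set.ncard (Set.Iic t) :=
            Set.ncard_le_ncard (fun k hk => hk.1) (Set.finite_Iic t)
        _ = t + 1 := by rw [← Finset.coe_Iic, Set.ncard_coe_finset, Nat.card_Iic]
    rcases Nat.eq_zero_or_pos t with rfl | htpos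
    · simp
    · have htR : (0:ℝ) < t := by exact_mod_cast htpos
      rw [div_le_iff₀ htR]
      have h2 : (Nat.card {k : ℕ | k ≤ t ∧
          PowerSeries.coeff k F ≠ PowerSeries.coeff k G} : ℝ) ≤ t + 1 := by
        exact_mod_cast h1
      have htR1 : (1:ℝ) ≤ t := by exact_mod_cast htpos
      linarith
  obtain ⟨x, hx1, hx2⟩ := exists_between h
  have htendD : Filter.Tendsto (fun t : ℕ => 1/(N:ℝ) - D/t) Filter.atTop (nhds (1/N)) := by
    have hz := tendsto_const_div_atTop_nhds_zero_nat (D:ℝ)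
    simpa using tendsto_const_nhds.sub hz
  have hev : ∀ᶠ t : ℕ in Filter.atTop, x ≤ (Nat.card {k : ℕ | k ≤ t ∧
      PowerSeries.coeff k F ≠ PowerSeries.coeff k G} : ℝ) / t := by
    have h1 := htendD.eventually (eventually_gt_nhds hx2)
    have h2 : ∀ᶠ t : ℕ in Filter.atTop, D + 1 ≤ t :=
      Filter.eventually_atTop.mpr ⟨D+1, fun t ht => ht⟩
    filter_upwards [h1, h2] with t ht1 ht2
    exact le_trans ht1.le (hlow t ht2)
  exact absurd (Filter.le_limsup_of_frequently_le hev.frequently hub) (not_le.mpr hx1)
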